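/- arXiv:1806.06316 — 4 statements merged into one kernel-verified Lean document; each statement's English description precedes it below -/
import Mathlib

section
/- Let G₁, G₂ be compact Lie groups and Z a subgroup of Z(G₁) × Z(G₂) with Z ∩ (Z(G₁) × {1}) = 1 and Z ∩ ({1} × Z(G₂)) = 1. If the quotient (G₁ × G₂)/Z is acceptable, then both G₁ and G₂ are acceptable. -/
/-- A group `G` is *acceptable* if any two element-conjugate homomorphisms from a
finite group into `G` are globally conjugate. -/
def IsAcceptable (G : Type*) [Group G] : Prop :=
  ∀ (Γ : Type) [Group Γ] [Finite Γ], ∀ φ₁ φ₂ : Γ →* G,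
    (∀ x, IsConj (φ₁ x) (φ₂ x)) → ∃ g : G, ∀ x, φ₂ x = g * φ₁ x * g⁻¹

/-- A group `G` is *strongly acceptable* if any two element-conjugate homomorphisms from a
compact group into `G` are globally conjugate. -/
def IsStronglyAcceptable (G : Type*) [Group G] : Prop :=
  ∀ (Γ : Type) [Group Γ] [TopologicalSpace Γ] [IsTopologicalGroup Γ] [CompactSpace Γ],
    ∀ φ₁ φ₂ : Γ →* G,
    (∀ x, IsConj (φ₁ x) (φ₂ x)) → ∃ g : G, ∀ x, φ₂ x = g * φ₁ x * g⁻¹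

/-- A subgroup `H` of `G` *strongly controls its fusion* in `G` if any two homomorphisms
from a compact group into `H` that are conjugate by an element of `G` are already
conjugate by an element of `H`. -/
def StronglyControlsFusion {G : Type*} [Group G] (H : Subgroup G) : Prop :=
  ∀ (Γ : Type) [Group Γ] [TopologicalSpace Γ] [IsTopologicalGroup Γ] [CompactSpace Γ],
    ∀ φ₁ φ₂ : Γ →* H,
    (∃ g : G, ∀ x, (φ₂ x : G) = g * (φ₁ x : G) * g⁻¹) →
    ∃ h : H, ∀ x, φ₂ x = h * φ₁ x * h⁻¹

theorem aux1 {G₁ G₂ : Type*} [Group G₁] [Group G₂]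
    (Z : Subgroup (G₁ × G₂)) [Z.Normal]
    (hZcentral : Z ≤ Subgroup.center (G₁ × G₂))
    (hZ₁ : Z ⊓ (Subgroup.center G₁).prod ⊥ = ⊥)
    (hQ : IsAcceptable ((G₁ × G₂) ⧸ Z)) :
    IsAcceptable G₁ := by
  intro Γ _ _ φ₁ φ₂ hconj
  obtain ⟨g, hg⟩ := hQ Γ ((QuotientGroup.mk' Z).comp ((MonoidHom.inl G₁ G₂).comp φ₁))
    ((QuotientGroup.mk' Z).comp ((MonoidHom.inl G₁ G₂).comp φ₂))
    (fun x => (QuotientGroup.mk' Z).map_isConj ((MonoidHom.inl G₁ G₂).map_isConj (hconj x)))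
  obtain ⟨⟨g₁, g₂⟩, rfl⟩ := QuotientGroup.mk'_surjective Z g
  refine ⟨g₁, fun x => ?_⟩
  have h := hg x
  simp only [MonoidHom.comp_apply, MonoidHom.inl_apply, QuotientGroup.mk'_apply] at h
  rw [← QuotientGroup.mk_inv, ← QuotientGroup.mk_mul, ← QuotientGroup.mk_mul] at h
  rw [QuotientGroup.eq] at h
  set z : G₁ × G₂ := ((φ₂ x, 1) : G₁ × G₂)⁻¹ * ((g₁, g₂) * (φ₁ x, 1) * (g₁, g₂)⁻¹) with hzdef
  have hz2 : z.2 = 1 := by simp [hzdef]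
  have hz1c : z.1 ∈ Subgroup.center G₁ := by
    rw [Subgroup.mem_center_iff]
    intro a
    have := (Subgroup.mem_center_iff.mp (hZcentral h)) (a, 1)
    exact congrArg Prod.fst this
  have hzbot : z ∈ (⊥ : Subgroup (G₁ × G₂)) := by
    rw [← hZ₁]
    exact ⟨h, Subgroup.mem_prod.mpr ⟨hz1c, by simp [hz2]⟩⟩
  have hz1 : z = 1 := hzbot
  have := congrArg Prod.fst hz1
  simp only [hzdef, Prod.fst_mul, Prod.fst_inv] at this
  have : (φ₂ x)⁻¹ * (g₁ * φ₁ x * g₁⁻¹) = 1 := this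
  exact inv_mul_eq_one.mp this

theorem aux2 {G₁ G₂ : Type*} [Group G₁] [Group G₂]
    (Z : Subgroup (G₁ × G₂)) [Z.Normal]
    (hZcentral : Z ≤ Subgroup.center (G₁ × G₂))
    (hZ₂ : Z ⊓ (⊥ : Subgroup G₁).prod (Subgroup.center G₂) = ⊥)
    (hQ : IsAcceptable ((G₁ × G₂) ⧸ Z)) :
    IsAcceptable G₂ := by
  intro Γ _ _ φ₁ φ₂ hconj
  obtain ⟨g, hg⟩ := hQ Γ ((QuotientGroup.mk' Z).comp ((MonoidHom.inr G₁ G₂).comp φ₁))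
    ((QuotientGroup.mk' Z).comp ((MonoidHom.inr G₁ G₂).comp φ₂))
    (fun x => (QuotientGroup.mk' Z).map_isConj ((MonoidHom.inr G₁ G₂).map_isConj (hconj x)))
  obtain ⟨⟨g₁, g₂⟩, rfl⟩ := QuotientGroup.mk'_surjective Z g
  refine ⟨g₂, fun x => ?_⟩
  have h := hg x
  simp only [MonoidHom.comp_apply, MonoidHom.inr_apply, QuotientGroup.mk'_apply] at h
  rw [← QuotientGroup.mk_inv, ← QuotientGroup.mk_mul, ← QuotientGroup.mk_mul] at h
  rw [QuotientGroup.eq] at h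
  set z : G₁ × G₂ := ((1, φ₂ x) : G₁ × G₂)⁻¹ * ((g₁, g₂) * (1, φ₁ x) * (g₁, g₂)⁻¹) with hzdef
  have hz1e : z.1 = 1 := by simp [hzdef]
  have hz2c : z.2 ∈ Subgroup.center G₂ := by
    rw [Subgroup.mem_center_iff]
    intro a
    have := (Subgroup.mem_center_iff.mp (hZcentral h)) (1, a)
    exact congrArg Prod.snd this
  have hzbot : z ∈ (⊥ : Subgroup (G₁ × G₂)) := by
    rw [← hZ₂]
    exact ⟨h, Subgroup.mem_prod.mpr ⟨by simp [hz1e], hz2c⟩⟩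
  have hz1 : z = 1 := hzbot
  have := congrArg Prod.snd hz1
  simp only [hzdef, Prod.snd_mul, Prod.snd_inv] at this
  have : (φ₂ x)⁻¹ * (g₂ * φ₁ x * g₂⁻¹) = 1 := this
  exact inv_mul_eq_one.mp this

open scoped Manifold

/-- If `Z ⊆ Z(G₁) × Z(G₂)` meets both factors trivially and
`(G₁ × G₂)/Z` is acceptable, then `G₁` and `G₂` are acceptable. -/
theorem acceptable_of_quotient_product
    {E₁ : Type*} [NormedAddCommGroup E₁] [NormedSpace ℝ E₁]
    {E₂ : Type*} [NormedAddCommGroup E₂] [NormedSpace ℝ E₂]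
    {G₁ : Type*} [Group G₁] [TopologicalSpace G₁] [IsTopologicalGroup G₁]
    [ChartedSpace E₁ G₁] [LieGroup 𝓘(ℝ, E₁) (⊤ : ℕ∞) G₁] [CompactSpace G₁]
    {G₂ : Type*} [Group G₂] [TopologicalSpace G₂] [IsTopologicalGroup G₂]
    [ChartedSpace E₂ G₂] [LieGroup 𝓘(ℝ, E₂) (⊤ : ℕ∞) G₂] [CompactSpace G₂]
    (Z : Subgroup (G₁ × G₂)) [Z.Normal]
    (hZcentral : Z ≤ Subgroup.center (G₁ × G₂))
    (hZ₁ : Z ⊓ (Subgroup.center G₁).prod ⊥ = ⊥)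
    (hZ₂ : Z ⊓ (⊥ : Subgroup G₁).prod (Subgroup.center G₂) = ⊥)
    (hQ : IsAcceptable ((G₁ × G₂) ⧸ Z)) :
    IsAcceptable G₁ ∧ IsAcceptable G₂ := by
  exact ⟨aux1 Z hZcentral hZ₁ hQ, aux2 Z hZcentral hZ₂ hQ⟩
end

section
/- Let G be a compact Lie group and A ⊆ G a closed abelian subgroup. If G is strongly acceptable (any two element-conjugate homomorphisms from a compact group into G are globally conjugate), then the centralizer Z_G(A) is strongly acceptable. -/
open Metric Set

/-- A compact charted space over a normed real vector space has finite-dimensional model. -/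
lemma aux_findim {E : Type*} [NormedAddCommGroup E] [NormedSpace ℝ E]
    {G : Type*} [Group G] [TopologicalSpace G] [IsTopologicalGroup G]
    [ChartedSpace E G] [CompactSpace G] [Nonempty G] : FiniteDimensional ℝ E := by
  obtain ⟨x⟩ := ‹Nonempty G›
  set c := chartAt E x with hc
  have h1 : x ∈ c.source := mem_chart_source E x
  have hnhds : c.source ∈ nhds x := c.open_source.mem_nhds h1
  obtain ⟨t, ht_nhds, ht_closed, ht_sub⟩ := exists_mem_nhds_isClosed_subset hnhds
  have ht_cpt : IsCompact t := ht_closed.isCompact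
  have himg_cpt : IsCompact (c '' t) := ht_cpt.image_of_continuousOn (c.continuousOn.mono ht_sub)
  have hmem : c '' t ∈ nhds (c x) := by
    refine Filter.mem_of_superset
      ((c.isOpen_image_of_subset_source isOpen_interior
        ((interior_subset).trans ht_sub)).mem_nhds ?_)
      (image_mono interior_subset)
    exact ⟨x, mem_interior_iff_mem_nhds.2 ht_nhds, rfl⟩
  obtain ⟨r, hr0, hsub⟩ := Metric.nhds_basis_closedBall.mem_iff.1 hmem
  exact FiniteDimensional.of_isCompact_closedBall ℝ hr0
    (himg_cpt.of_isClosed_subset isClosed_closedBall hsub)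

lemma aux_small {E : Type*} [NormedAddCommGroup E] [NormedSpace ℝ E]
    {G : Type*} [Group G] [TopologicalSpace G] [IsTopologicalGroup G]
    [ChartedSpace E G] [CompactSpace G] : Small.{0} G := by
  cases isEmpty_or_nonempty G with
  | inl h => infer_instance
  | inr h =>
    haveI : FiniteDimensional ℝ E := aux_findim (G := G)
    haveI : Small.{0} E := small_of_injective (Module.finBasis ℝ E).equivFun.injective
    obtain ⟨s, hs⟩ := isCompact_univ.elim_finite_subcover
      (fun x : G => (chartAt E x).source) (fun x => (chartAt E x).open_source)
      (fun g _ => mem_iUnion.2 ⟨g, mem_chart_source E g⟩)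
    have hfn : ∀ g : G, ∃ x ∈ s, g ∈ (chartAt E x).source := by
      intro g
      have := hs (mem_univ g)
      simpa using this
    choose f hf1 hf2 using hfn
    have hinj : Function.Injective
        (fun g : G => ((⟨f g, hf1 g⟩ : {x // x ∈ s}), chartAt E (f g) g)) := by
      intro a b hab
      have h1 : f a = f b := congrArg (fun p => (p.1 : G)) hab
      have h2 : chartAt E (f a) a = chartAt E (f a) b := by
        have := congrArg Prod.snd hab
        simpa [h1] using this
      exact (chartAt E (f a)).injOn (hf2 a) (h1 ▸ hf2 b) h2
    exact small_of_injective hinj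

section MainAux
variable {G : Type*} [Group G] [TopologicalSpace G] [IsTopologicalGroup G] [CompactSpace G]
variable {G : Type*} [Group G] [TopologicalSpace G] [IsTopologicalGroup G] [CompactSpace G]

lemma aux_main (A : Subgroup G) (hAclosed : IsClosed (A : Set G))
    (hsmall : Small.{0} G) (hG : IsStronglyAcceptable G) :
    IsStronglyAcceptable (Subgroup.centralizer (A : Set G)) := by
  intro Γ _ _ _ _ φ₁ φ₂ hconj
  haveI : CompactSpace (↥A) := isCompact_iff_compactSpace.1 hAclosed.isCompact
  haveI hsA : Small.{0} (↥A) := inferInstance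
  -- topology on the small model
  letI tA : TopologicalSpace (Shrink.{0} ↥A) :=
    TopologicalSpace.induced ((equivShrink ↥A).symm) inferInstance
  have hInd : Topology.IsInducing ((equivShrink ↥A).symm : Shrink.{0} ↥A → ↥A) := ⟨rfl⟩
  haveI : IsTopologicalGroup (Shrink.{0} ↥A) := by
    refine { continuous_mul := ?_, continuous_inv := ?_ }
    · rw [hInd.continuous_iff]
      have : ((equivShrink ↥A).symm ∘ fun p : Shrink.{0} ↥A × Shrink.{0} ↥A => p.1 * p.2)
          = fun p => (equivShrink ↥A).symm p.1 * (equivShrink ↥A).symm p.2 := by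
        funext p; exact equivShrink_symm_mul p.1 p.2
      rw [this]
      exact (hInd.continuous.comp continuous_fst).mul (hInd.continuous.comp continuous_snd)
    · rw [hInd.continuous_iff]
      have : ((equivShrink ↥A).symm ∘ fun x : Shrink.{0} ↥A => x⁻¹)
          = fun x => ((equivShrink ↥A).symm x)⁻¹ := funext fun x => equivShrink_symm_inv x
      rw [this]
      exact hInd.continuous.inv
  haveI : CompactSpace (Shrink.{0} ↥A) :=
    (((equivShrink ↥A).symm.toHomeomorphOfIsInducing hInd).symm).compactSpace
  -- the inclusion of the small model of A into G
  let ι : Shrink.{0} ↥A →* G := A.subtype.comp (Shrink.mulEquiv (α := ↥A)).toMonoidHom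
  have hιA : ∀ a : Shrink.{0} ↥A, ι a ∈ A := fun a => (Shrink.mulEquiv (α := ↥A) a).2
  have comm : ∀ (z : G), z ∈ Subgroup.centralizer (A : Set G) → ∀ a : Shrink.{0} ↥A, ι a * z = z * ι a := by
    intro z hz a
    exact Subgroup.mem_centralizer_iff.1 hz (ι a) (hιA a)
  -- extensions to Γ × (small A)
  let ψ : (Γ →* ↥(Subgroup.centralizer (A : Set G))) → ((Γ × Shrink.{0} ↥A) →* G) := fun φ =>
    { toFun := fun p => (φ p.1 : G) * ι p.2
      map_one' := by simp
      map_mul' := by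
        rintro ⟨x, a⟩ ⟨y, b⟩
        show ((φ (x * y) : ↥(Subgroup.centralizer (A : Set G))) : G) * ι (a * b) = _
        rw [map_mul, map_mul, Subgroup.coe_mul]
        have h := comm ((φ y : ↥(Subgroup.centralizer (A : Set G))) : G) (φ y).2 a
        calc (φ x : G) * (φ y : G) * (ι a * ι b)
            = (φ x : G) * ((φ y : G) * ι a) * ι b := by group
          _ = (φ x : G) * (ι a * (φ y : G)) * ι b := by rw [h]
          _ = (φ x : G) * ι a * ((φ y : G) * ι b) := by group }
  have hψconj : ∀ p : Γ × Shrink.{0} ↥A, IsConj (ψ φ₁ p) (ψ φ₂ p) := by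
    rintro ⟨x, a⟩
    obtain ⟨c, hc⟩ := isConj_iff.1 (hconj x)
    refine isConj_iff.2 ⟨(c : G), ?_⟩
    have hcG : (c : G) * (φ₁ x : G) * (c : G)⁻¹ = (φ₂ x : G) := by
      have := congrArg (fun z : ↥(Subgroup.centralizer (A : Set G)) => (z : G)) hc
      simpa using this
    show (c : G) * ((φ₁ x : G) * ι a) * (c : G)⁻¹ = (φ₂ x : G) * ι a
    have hcomm : ι a * (c : G)⁻¹ = (c : G)⁻¹ * ι a := comm _ ((Subgroup.centralizer (A : Set G)).inv_mem c.2) a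
    calc (c : G) * ((φ₁ x : G) * ι a) * (c : G)⁻¹
        = (c : G) * (φ₁ x : G) * (ι a * (c : G)⁻¹) := by group
      _ = (c : G) * (φ₁ x : G) * ((c : G)⁻¹ * ι a) := by rw [hcomm]
      _ = ((c : G) * (φ₁ x : G) * (c : G)⁻¹) * ι a := by group
      _ = (φ₂ x : G) * ι a := by rw [hcG]
  obtain ⟨g, hg⟩ := hG (Γ × Shrink.{0} ↥A) (ψ φ₁) (ψ φ₂) hψconj
  have hgA : ∀ a : Shrink.{0} ↥A, ι a = g * ι a * g⁻¹ := by
    intro a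
    have := hg (1, a)
    simp only [ψ, MonoidHom.coe_mk, OneHom.coe_mk, map_one, OneMemClass.coe_one,
      one_mul] at this
    exact this
  have hgZ : g ∈ Subgroup.centralizer (A : Set G) := by
    refine Subgroup.mem_centralizer_iff.2 fun h hh => ?_
    obtain ⟨a, ha⟩ := (Shrink.mulEquiv (α := ↥A)).surjective ⟨h, hh⟩
    have hha : ι a = h := congrArg Subtype.val ha
    have := hgA a
    rw [hha] at this
    calc h * g = (g * h * g⁻¹) * g := by rw [← this]
      _ = g * h := by group
  refine ⟨⟨g, hgZ⟩, fun x => ?_⟩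
  have := hg (x, 1)
  simp only [ψ, MonoidHom.coe_mk, OneHom.coe_mk, map_one, mul_one] at this
  ext
  push_cast
  exact this
end MainAux

open scoped Manifold

/-- If a compact Lie group `G` is strongly acceptable and `A` is a closed
abelian subgroup, then the centralizer `Z_G(A)` is strongly acceptable. -/
theorem stronglyAcceptable_centralizer
    {E : Type*} [NormedAddCommGroup E] [NormedSpace ℝ E]
    {G : Type*} [Group G] [TopologicalSpace G] [IsTopologicalGroup G]
    [ChartedSpace E G] [LieGroup 𝓘(ℝ, E) (⊤ : ℕ∞) G] [CompactSpace G]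
    (A : Subgroup G) (hAclosed : IsClosed (A : Set G))
    (hAabelian : ∀ x ∈ A, ∀ y ∈ A, x * y = y * x)
    (hG : IsStronglyAcceptable G) :
    IsStronglyAcceptable (Subgroup.centralizer (A : Set G)) := by
  exact aux_main A hAclosed (aux_small (E := E)) hG
end

section
/- Let G be a compact Lie group and H ⊆ G a closed subgroup. Then H strongly controls its fusion in G if and only if for every g ∈ G, g lies in the product set Z_G(H ∩ gHg⁻¹) · H. -/
open scoped Manifold Pointwise

/-- A second countable T1 space is small (it injects into the set of sets of basic opens). -/
lemma SCF.aux_small (X : Type*) [TopologicalSpace X] [SecondCountableTopology X] [T1Space X] :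
    Small.{0} X := by
  haveI : Countable (TopologicalSpace.countableBasis X) :=
    (TopologicalSpace.countable_countableBasis X).to_subtype
  haveI : Small.{0} (Set (TopologicalSpace.countableBasis X)) := inferInstance
  have hinj : Function.Injective
      (fun x : X => {s : TopologicalSpace.countableBasis X | x ∈ (s : Set X)}) := by
    intro x y hxy
    by_contra hne
    obtain ⟨s, hs, hxs, hsub⟩ :=
      (TopologicalSpace.isBasis_countableBasis X).exists_subset_of_mem_open
        (show x ∈ ({y}ᶜ : Set X) from hne) isOpen_compl_singleton
    have h1 : (⟨s, hs⟩ : TopologicalSpace.countableBasis X) ∈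
        {s : TopologicalSpace.countableBasis X | x ∈ (s : Set X)} := hxs
    rw [show {s : TopologicalSpace.countableBasis X | x ∈ (s : Set X)}
        = {s : TopologicalSpace.countableBasis X | y ∈ (s : Set X)} from hxy] at h1
    exact (hsub h1) rfl
  exact small_of_injective hinj

/-- Forward direction core: if `H` strongly controls its fusion, then every `g` decomposes. -/
lemma SCF.aux_forward {G : Type*} [Group G] [TopologicalSpace G] [IsTopologicalGroup G]
    [Small.{0} G] (H : Subgroup G) (hSCF : StronglyControlsFusion H) (g : G)
    (hcpt : CompactSpace ↥(H ⊓ Subgroup.map (MulAut.conj g).toMonoidHom H : Subgroup G)) :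
    g ∈ (Subgroup.centralizer
          ((H ⊓ Subgroup.map (MulAut.conj g).toMonoidHom H : Subgroup G) : Set G) : Set G)
        * (H : Set G) := by
  set K : Subgroup G := H ⊓ Subgroup.map (MulAut.conj g).toMonoidHom H with hK
  have hKle : K ≤ H := inf_le_left
  have hmemK : ∀ k : K, g⁻¹ * (k : G) * g ∈ H := by
    intro k
    have hk2 : (k : G) ∈ K := k.2
    obtain ⟨a, ha, hak⟩ := Subgroup.mem_map.1 (Subgroup.mem_inf.1 hk2).2
    have : g⁻¹ * (k : G) * g = a := by
      rw [← hak]; simp [MulAut.conj_apply]; group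
    rw [this]; exact ha
  -- the compact group Γ
  letI Γ := Shrink.{0} ↥K
  letI tΓ : TopologicalSpace Γ :=
    TopologicalSpace.induced (equivShrink ↥K).symm inferInstance
  have homeo : Γ ≃ₜ ↥K := (equivShrink ↥K).symm.toHomeomorphOfIsInducing ⟨rfl⟩
  have hc : Continuous ((equivShrink ↥K).symm : Γ → ↥K) := continuous_induced_dom
  haveI : CompactSpace Γ := homeo.symm.compactSpace
  haveI : ContinuousMul Γ := by
    constructor
    rw [continuous_induced_rng]
    have : ((equivShrink ↥K).symm ∘ fun p : Γ × Γ => p.1 * p.2)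
        = fun p : Γ × Γ => (equivShrink ↥K).symm p.1 * (equivShrink ↥K).symm p.2 :=
      funext fun p => equivShrink_symm_mul _ _
    rw [this]
    exact (hc.comp continuous_fst).mul (hc.comp continuous_snd)
  haveI : ContinuousInv Γ := by
    constructor
    rw [continuous_induced_rng]
    have : ((equivShrink ↥K).symm ∘ fun x : Γ => x⁻¹)
        = fun x : Γ => ((equivShrink ↥K).symm x)⁻¹ := funext fun p => equivShrink_symm_inv _
    rw [this]
    exact hc.inv
  haveI : IsTopologicalGroup Γ := {}
  -- homomorphisms
  let ν : Γ →* ↥K :=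
    { toFun := (equivShrink ↥K).symm
      map_one' := equivShrink_symm_one
      map_mul' := equivShrink_symm_mul }
  let ψ₁ : ↥K →* ↥H :=
    { toFun := fun k => ⟨g⁻¹ * (k : G) * g, hmemK k⟩
      map_one' := Subtype.ext (by simp)
      map_mul' := fun a b => Subtype.ext (by push_cast; group) }
  let φ₁ : Γ →* ↥H := ψ₁.comp ν
  let φ₂ : Γ →* ↥H := (Subgroup.inclusion hKle).comp ν
  have hconj : ∃ gg : G, ∀ x, ((φ₂ x : ↥H) : G) = gg * ((φ₁ x : ↥H) : G) * gg⁻¹ := by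
    refine ⟨g, fun x => ?_⟩
    show ((Subgroup.inclusion hKle (ν x) : ↥H) : G) = g * ((ψ₁ (ν x) : ↥H) : G) * g⁻¹
    rw [Subgroup.coe_inclusion]
    show ((ν x : ↥K) : G) = g * (g⁻¹ * ((ν x : ↥K) : G) * g) * g⁻¹
    group
  obtain ⟨h, hh⟩ := hSCF Γ φ₁ φ₂ hconj
  have hz : g * (↑h)⁻¹ ∈ Subgroup.centralizer (K : Set G) := by
    rw [Subgroup.mem_centralizer_iff]
    intro k hk
    have hk' : k ∈ K := hk
    set x₀ : Γ := equivShrink ↥K ⟨k, hk'⟩ with hx₀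
    have spec : ((Subgroup.inclusion hKle (ν x₀) : ↥H) : G)
        = ((h * (ψ₁ (ν x₀)) * h⁻¹ : ↥H) : G) := congrArg Subtype.val (hh x₀)
    rw [Subgroup.coe_inclusion] at spec
    have hν : ν x₀ = ⟨k, hk'⟩ := (equivShrink ↥K).symm_apply_apply _
    rw [hν] at spec
    have spec2 : k = (↑h : G) * (g⁻¹ * k * g) * (↑h : G)⁻¹ := by
      refine spec.trans ?_
      push_cast
      rfl
    conv_rhs => rw [spec2]
    group
  exact Set.mem_mul.2 ⟨g * (↑h)⁻¹, hz, ↑h, h.2, by group⟩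

/-- Backward direction: the decomposition condition implies strong control of fusion. -/
lemma SCF.aux_backward {G : Type*} [Group G] (H : Subgroup G)
    (hyp : ∀ g : G,
      g ∈ (Subgroup.centralizer
            ((H ⊓ Subgroup.map (MulAut.conj g).toMonoidHom H : Subgroup G) : Set G) : Set G)
          * (H : Set G)) :
    StronglyControlsFusion H := by
  intro Γ _ _ _ _ φ₁ φ₂ hconj
  obtain ⟨g, hg⟩ := hconj
  obtain ⟨z, hz, h, hh, hzh⟩ := Set.mem_mul.1 (hyp g)
  refine ⟨⟨h, hh⟩, fun x => ?_⟩
  have hmem : ((φ₂ x : ↥H) : G) ∈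
      ((H ⊓ Subgroup.map (MulAut.conj g).toMonoidHom H : Subgroup G) : Set G) := by
    refine SetLike.mem_coe.2 (Subgroup.mem_inf.2 ⟨(φ₂ x).2, Subgroup.mem_map.2
      ⟨((φ₁ x : ↥H) : G), (φ₁ x).2, ?_⟩⟩)
    simpa [MulAut.conj_apply] using (hg x).symm
  have hcomm := Subgroup.mem_centralizer_iff.1 hz _ hmem
  apply Subtype.ext
  push_cast
  have hgx := hg x
  rw [← hzh] at hgx
  have key : (h : G) * ((φ₁ x : ↥H) : G) * h⁻¹ = z⁻¹ * ((φ₂ x : ↥H) : G) * z := by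
    rw [hgx]; group
  rw [key, mul_assoc, hcomm, ← mul_assoc, inv_mul_cancel, one_mul]

/-- `H` strongly controls its fusion in the compact Lie group `G` iff for
every `g ∈ G` one has `g ∈ Z_G(H ∩ gHg⁻¹) · H`. -/
theorem stronglyControlsFusion_iff
    {E : Type*} [NormedAddCommGroup E] [NormedSpace ℝ E]
    {G : Type*} [Group G] [TopologicalSpace G] [IsTopologicalGroup G]
    [ChartedSpace E G] [LieGroup 𝓘(ℝ, E) (⊤ : ℕ∞) G] [CompactSpace G]
    (H : Subgroup G) (hHclosed : IsClosed (H : Set G)) :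
    StronglyControlsFusion H ↔
      ∀ g : G,
        g ∈ (Subgroup.centralizer
              ((H ⊓ Subgroup.map (MulAut.conj g).toMonoidHom H : Subgroup G) : Set G) : Set G)
            * (H : Set G) := by
  constructor
  · intro hSCF g
    -- set up the topological preliminaries
    set c := chartAt E (1 : G) with hcdef
    have h1s : (1 : G) ∈ c.source := mem_chart_source E 1
    haveI hT2 : T2Space G := by
      apply IsTopologicalGroup.t2Space_of_one_sep
      intro x hx
      by_cases hxs : x ∈ c.source
      · have hne : c 1 ≠ c x := fun hcx => hx (c.injOn h1s hxs hcx).symm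
        refine ⟨c ⁻¹' {c x}ᶜ ∩ c.source, ?_, ?_⟩
        · exact Filter.inter_mem
            ((c.continuousAt h1s).preimage_mem_nhds (isOpen_compl_singleton.mem_nhds hne))
            (c.open_source.mem_nhds h1s)
        · exact fun hmem => hmem.1 rfl
      · exact ⟨c.source, c.open_source.mem_nhds h1s, hxs⟩
    haveI : LocallyCompactSpace G := inferInstance
    haveI hLE : LocallyCompactSpace E := by
      obtain ⟨K₀, hK₀n, hK₀sub, hK₀c⟩ := local_compact_nhds (c.open_source.mem_nhds h1s)
      have himg : IsCompact (c '' K₀) := hK₀c.image_of_continuousOn (c.continuousOn.mono hK₀sub)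
      have hmem : c '' K₀ ∈ nhds (c 1) := by
        rw [← c.map_nhds_eq h1s]; exact Filter.image_mem_map hK₀n
      exact himg.locallyCompactSpace_of_mem_nhds_of_addGroup hmem
    haveI : ProperSpace E := ProperSpace.of_locallyCompactSpace ℝ
    haveI : SecondCountableTopology G := ChartedSpace.secondCountable_of_sigmaCompact E G
    haveI : Small.{0} G := SCF.aux_small G
    -- compactness of `H ⊓ gHg⁻¹`
    have h2 : IsClosed ((Subgroup.map (MulAut.conj g).toMonoidHom H : Subgroup G) : Set G) := by
      have himg : ((Subgroup.map (MulAut.conj g).toMonoidHom H : Subgroup G) : Set G)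
          = ((Homeomorph.mulLeft g).trans (Homeomorph.mulRight g⁻¹)) '' (H : Set G) := by
        rw [Subgroup.coe_map]
        exact Set.image_congr' (fun a => rfl)
      rw [himg]
      exact ((Homeomorph.mulLeft g).trans (Homeomorph.mulRight g⁻¹)).isClosedMap _ hHclosed
    have hKclosed :
        IsClosed ((H ⊓ Subgroup.map (MulAut.conj g).toMonoidHom H : Subgroup G) : Set G) := by
      rw [Subgroup.coe_inf]
      exact hHclosed.inter h2
    haveI hcpt :
        CompactSpace ↥(H ⊓ Subgroup.map (MulAut.conj g).toMonoidHom H : Subgroup G) :=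
      isCompact_iff_compactSpace.1 hKclosed.isCompact
    exact SCF.aux_forward H hSCF g hcpt
  · exact SCF.aux_backward H
end

section
/- Let G be a connected compact Lie group, θ an involutive automorphism of G, H = G^θ the fixed-point subgroup, and 𝔭₀ the (-1)-eigenspace of dθ on the Lie algebra of G. Then for every g ∈ exp(𝔭₀), H ∩ gHg⁻¹ = H ∩ Z_G(g²), i.e., the intersection of H with its conjugate by g equals the centralizer of g² in H. -/
open Matrix
open scoped Pointwise

/-- The Lie algebra of a matrix group `G ⊆ GL(n, ℝ)`: all matrices whose one-parameter
exponential subgroup lies in `G`. -/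
def lieAlgOf {n : ℕ} (G : Subgroup (GL (Fin n) ℝ)) : Set (Matrix (Fin n) (Fin n) ℝ) :=
  {X | ∀ t : ℝ, ∃ u ∈ G, (↑u : Matrix (Fin n) (Fin n) ℝ) = NormedSpace.exp (t • X)}

/-- The fixed-point subgroup `G^θ` of an automorphism `θ` preserving `G`. -/
def fixedSubgroup {n : ℕ} (G : Subgroup (GL (Fin n) ℝ))
    (θ : GL (Fin n) ℝ ≃* GL (Fin n) ℝ) (hθG : ∀ x, x ∈ G ↔ θ x ∈ G) :
    Subgroup (GL (Fin n) ℝ) where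
  carrier := {x | x ∈ G ∧ θ x = x}
  one_mem' := ⟨G.one_mem, map_one θ⟩
  mul_mem' := fun ha hb => ⟨G.mul_mem ha.1 hb.1, by rw [_root_.map_mul, ha.2, hb.2]⟩
  inv_mem' := fun ha => ⟨G.inv_mem ha.1, by rw [_root_.map_inv, ha.2]⟩

/-- If `θ` is an involutive automorphism of the connected compact group
`G` with fixed subgroup `H = G^θ` and `𝔭₀` is the `(-1)`-eigenspace of `dθ`, then for every
`g ∈ exp 𝔭₀` one has `H ∩ gHg⁻¹ = H ∩ Z_G(g²)`. -/
theorem inter_conj_eq_centralizer_sq {n : ℕ} (G : Subgroup (GL (Fin n) ℝ))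
    (hGcompact : IsCompact (G : Set (GL (Fin n) ℝ)))
    (hGconn : IsConnected (G : Set (GL (Fin n) ℝ)))
    (θ : GL (Fin n) ℝ ≃* GL (Fin n) ℝ)
    (hθG : ∀ x, x ∈ G ↔ θ x ∈ G)
    (hθ₂ : ∀ x, θ (θ x) = x)
    (dθ : Matrix (Fin n) (Fin n) ℝ →ₗ[ℝ] Matrix (Fin n) (Fin n) ℝ)
    (hdθ : ∀ X ∈ lieAlgOf G, ∀ u : GL (Fin n) ℝ,
      u.val = NormedSpace.exp X → (θ u).val = NormedSpace.exp (dθ X))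
    (g : GL (Fin n) ℝ) (hgG : g ∈ G)
    (hgexp : ∃ X ∈ {X ∈ lieAlgOf G | dθ X = -X}, g.val = NormedSpace.exp X) :
    ∀ x : GL (Fin n) ℝ,
      (x ∈ fixedSubgroup G θ hθG ∧
        x ∈ Subgroup.map (MulAut.conj g).toMonoidHom (fixedSubgroup G θ hθG)) ↔
      (x ∈ fixedSubgroup G θ hθG ∧ Commute x (g ^ 2)) := by
  -- First, θ g = g⁻¹
  obtain ⟨X, ⟨hXG, hXθ⟩, hgX⟩ := hgexp
  have hθg : θ g = g⁻¹ := by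
    have h1 : (θ g).val = NormedSpace.exp (-X) := by
      rw [hdθ X hXG g hgX, hXθ]
    have h2 : ((θ g) * g).val = (1 : GL (Fin n) ℝ).val := by
      show (θ g).val * g.val = _
      rw [h1, hgX, Units.val_one,
        ← Matrix.exp_add_of_commute (-X) X (Commute.refl X).neg_left,
        neg_add_cancel, NormedSpace.exp_zero]
    exact eq_inv_of_mul_eq_one_left (Units.ext h2)
  intro x
  constructor
  · rintro ⟨⟨hxG, hxθ⟩, y, ⟨hyG, hyθ⟩, hy⟩
    refine ⟨⟨hxG, hxθ⟩, ?_⟩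
    simp only [MulEquiv.toMonoidHom_eq_coe, MonoidHom.coe_coe, MulAut.conj_apply] at hy
    -- x = g y g⁻¹ ; applying θ gives x = g⁻¹ y g
    have hx2 : x = g⁻¹ * y * g := by
      conv_lhs => rw [← hxθ, ← hy]
      rw [_root_.map_mul, _root_.map_mul, hyθ, _root_.map_inv, hθg, inv_inv]
    have key : g * y * g⁻¹ = g⁻¹ * y * g := hy.trans hx2
    have hcomm : Commute y (g ^ 2) := by
      have h := congrArg (fun z => g * z * g) key
      simp only [mul_assoc, inv_mul_cancel_left, mul_inv_cancel_left, inv_mul_cancel,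
        mul_inv_cancel, mul_one] at h
      show y * g ^ 2 = g ^ 2 * y
      simp only [pow_two, mul_assoc]
      exact h.symm
    have := hcomm.map (MulAut.conj g).toMonoidHom
    simp only [MulEquiv.toMonoidHom_eq_coe, MonoidHom.coe_coe, MulAut.conj_apply, hy] at this
    have hgg : g * g ^ 2 * g⁻¹ = g ^ 2 := by group
    rwa [hgg] at this
  · rintro ⟨⟨hxG, hxθ⟩, hc⟩
    have hswap : g⁻¹ * x * g = g * x * g⁻¹ := by
      have := congrArg (fun z => g⁻¹ * z * g⁻¹) hc.eq
      simp only [pow_two, mul_assoc, inv_mul_cancel_left, mul_inv_cancel, mul_one,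
        inv_mul_cancel] at this
      simp [pow_two, ← mul_assoc] at this ⊢
      exact this
    refine ⟨⟨hxG, hxθ⟩, g⁻¹ * x * g,
      ⟨G.mul_mem (G.mul_mem (G.inv_mem hgG) hxG) hgG, ?_⟩, ?_⟩
    · rw [_root_.map_mul, _root_.map_mul, _root_.map_inv, hθg, hxθ, inv_inv, ← hswap]
    · simp only [MulEquiv.toMonoidHom_eq_coe, MonoidHom.coe_coe, MulAut.conj_apply]
      group
end
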